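/- Let G = (V,E) be a graph and let 1 ≤ r ≤ s be integers. Suppose G contains an independent set X of size s such that every vertex in V \ X has at most r-1 neighbors in X, and X is not a dominating set of G. Then there exists an r-coloring of the edges of G such that V(G) cannot be covered by the vertex sets of s or fewer monochromatic connected subgraphs (i.e., tc_r(G) > s). -/

import Mathlib

open SimpleGraph

/-- The subgraph of `G` consisting of edges of color `i` under edge-coloring `c`. -/
def monoSub {V : Type*} (G : SimpleGraph V) {r : ℕ} (c : Sym2 V → Fin r) (i : Fin r) :
    SimpleGraph V where
  Adj u v := G.Adj u v ∧ c s(u, v) = i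
  symm := ⟨fun u v h => ⟨h.1.symm, by rw [Sym2.eq_swap]; exact h.2⟩⟩
  loopless := ⟨fun u h => G.loopless.irrefl u h.1⟩

/-- `V(G)` can be covered by at most `s` monochromatic connected subgraphs. -/
def HasMonoCover {V : Type*} (G : SimpleGraph V) {r : ℕ} (c : Sym2 V → Fin r) (s : ℕ) : Prop :=
  ∃ t : ℕ, t ≤ s ∧ ∃ (f : Fin t → Set V) (col : Fin t → Fin r),
    (∀ j, ((monoSub G c (col j)).induce (f j)).Connected) ∧ (⋃ j, f j) = Set.univ

/-- `V(G)` can be partitioned into at most `s` monochromatic connected subgraphs. -/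
def HasMonoPartition {V : Type*} (G : SimpleGraph V) {r : ℕ} (c : Sym2 V → Fin r) (s : ℕ) : Prop :=
  ∃ t : ℕ, t ≤ s ∧ ∃ (f : Fin t → Set V) (col : Fin t → Fin r),
    (∀ j, ((monoSub G c (col j)).induce (f j)).Connected) ∧ (⋃ j, f j) = Set.univ ∧
    ∀ j j', j ≠ j' → Disjoint (f j) (f j')

/-- The independence number of `G`. -/
noncomputable def indepNum' {V : Type*} (G : SimpleGraph V) : ℕ :=
  sSup {k | ∃ s : Finset V, s.card = k ∧ ∀ u ∈ s, ∀ v ∈ s, u ≠ v → ¬ G.Adj u v}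

open Classical in
/-- Natural-number valued pre-coloring. -/
noncomputable def cNat {V : Type*} (G : SimpleGraph V) (X : Finset V) (r : ℕ) : Sym2 V → ℕ :=
  Sym2.lift ⟨fun a b =>
    if a ∈ X ∧ b ∉ X then ((X.filter (fun x => G.Adj b x)).toList.idxOf a)
    else if b ∈ X ∧ a ∉ X then ((X.filter (fun x => G.Adj a x)).toList.idxOf b)
    else r - 1, by
    intro a b
    by_cases ha : a ∈ X <;> by_cases hb : b ∈ X <;> simp [ha, hb]⟩

/-- The actual coloring. -/
noncomputable def myc {V : Type*} (G : SimpleGraph V) (X : Finset V) (r : ℕ) (hr : 0 < r) :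
    Sym2 V → Fin r := fun e => ⟨cNat G X r e % r, Nat.mod_lt _ hr⟩

open Classical in
theorem cNat_mk_left {V : Type*} (G : SimpleGraph V) (X : Finset V) (r : ℕ) {a b : V}
    (ha : a ∈ X) (hb : b ∉ X) :
    cNat G X r s(a, b) = ((X.filter (fun x => G.Adj b x)).toList.idxOf a) := by
  simp only [cNat, Sym2.lift_mk]
  rw [if_pos ⟨ha, hb⟩]

open Classical in
theorem cNat_mk_out {V : Type*} (G : SimpleGraph V) (X : Finset V) (r : ℕ) {a b : V}
    (ha : a ∉ X) (hb : b ∉ X) :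
    cNat G X r s(a, b) = r - 1 := by
  simp only [cNat, Sym2.lift_mk]
  rw [if_neg (by tauto), if_neg (by tauto)]

open Classical in
theorem key {V : Type*} (r : ℕ) (hr : 0 < r) (G : SimpleGraph V) (X : Finset V) (w : V)
    (hindep : ∀ u ∈ X, ∀ v ∈ X, ¬ G.Adj u v)
    (hdeg : ∀ v, v ∉ X → ({u : V | u ∈ X ∧ G.Adj v u}.ncard ≤ r - 1))
    (hw : w ∉ X) (hwadj : ∀ u ∈ X, ¬ G.Adj w u) (i : Fin r) :
    ∀ x y : V, (x ∈ X ∨ x = w) → (y ∈ X ∨ y = w) →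
      (monoSub G (myc G X r hr) i).Reachable x y → x = y := by
  have hcardN : ∀ v, v ∉ X → ((X.filter (fun x => G.Adj v x)).card ≤ r - 1) := by
    intro v hv
    have h := hdeg v hv
    have hset : {u : V | u ∈ X ∧ G.Adj v u} = ↑(X.filter (fun x => G.Adj v x)) := by
      ext u; simp [Finset.mem_filter]
    rwa [hset, Set.ncard_coe_finset] at h
  -- the color of an edge from outside to X is < r - 1 + 1, injectively determined
  set c := myc G X r hr with hc
  have hcol : ∀ a b : V, a ∈ X → b ∉ X → G.Adj a b →
      (c s(a,b) : ℕ) = ((X.filter (fun x => G.Adj b x)).toList.idxOf a) ∧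
      ((X.filter (fun x => G.Adj b x)).toList.idxOf a) < r := by
    intro a b ha hb hadj
    have hmem : a ∈ (X.filter (fun x => G.Adj b x)).toList := by
      simp [Finset.mem_toList, Finset.mem_filter, ha, hadj.symm]
    have hlt : ((X.filter (fun x => G.Adj b x)).toList.idxOf a) <
        (X.filter (fun x => G.Adj b x)).card := by
      simpa [Finset.length_toList] using List.idxOf_lt_length_iff.2 hmem
    have hltr : ((X.filter (fun x => G.Adj b x)).toList.idxOf a) < r :=
      lt_of_lt_of_le hlt (le_trans (hcardN b hb) (Nat.sub_le r 1))
    constructor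
    · rw [hc]; show cNat G X r s(a,b) % r = _
      rw [cNat_mk_left G X r ha hb, Nat.mod_eq_of_lt hltr]
    · exact hltr
  -- the label function
  set lab : V → V := fun v =>
    if v ∈ X then v
    else if h : ∃ u, u ∈ X ∧ G.Adj v u ∧ c s(v, u) = i then h.choose else w with hlab
  have lab_mem : ∀ x, x ∈ X → lab x = x := by intro x hx; simp [hlab, hx]
  have lab_w : lab w = w := by
    rw [hlab]
    simp only [hw, if_false]
    rw [dif_neg]
    rintro ⟨u, hu, hadj, _⟩
    exact hwadj u hu hadj
  -- label uniqueness for outside vertices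
  have lab_out : ∀ a b : V, a ∈ X → b ∉ X → G.Adj a b → c s(a,b) = i → lab b = a := by
    intro a b ha hb hadj hci
    have hex : ∃ u, u ∈ X ∧ G.Adj b u ∧ c s(b, u) = i :=
      ⟨a, ha, hadj.symm, by rwa [Sym2.eq_swap]⟩
    rw [hlab]
    simp only [hb, if_false]
    rw [dif_pos hex]
    obtain ⟨hu, hbu, hcu⟩ := hex.choose_spec
    set u := hex.choose
    -- u = a by injectivity of indexOf
    have h1 := hcol u b hu hb hbu.symm
    have h2 := hcol a b ha hb hadj
    have : c s(b, u) = c s(u, b) := by rw [Sym2.eq_swap]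
    rw [this] at hcu
    have : c s(a, b) = c s(b, a) := by rw [Sym2.eq_swap]
    have hic : (c s(u,b) : ℕ) = (c s(a,b) : ℕ) := by rw [hcu, hci]
    rw [h1.1, h2.1] at hic
    have hmemu : u ∈ (X.filter (fun x => G.Adj b x)).toList := by
      simp [Finset.mem_toList, Finset.mem_filter, hu, hbu]
    have hmema : a ∈ (X.filter (fun x => G.Adj b x)).toList := by
      simp [Finset.mem_toList, Finset.mem_filter, ha, hadj.symm]
    exact (List.idxOf_inj hmemu).1 hic
  -- edges preserve labels
  have pres : ∀ a b : V, (monoSub G c i).Adj a b → lab a = lab b := by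
    intro a b hab
    obtain ⟨hadj, hcab⟩ := hab
    by_cases ha : a ∈ X <;> by_cases hb : b ∈ X
    · exact absurd hadj (hindep a ha b hb)
    · rw [lab_mem a ha, lab_out a b ha hb hadj hcab]
    · have : c s(b, a) = i := by rwa [Sym2.eq_swap]
      rw [lab_mem b hb, lab_out b a hb ha hadj.symm this]
    · -- both outside: color is r-1, no outside vertex has a color-(r-1) edge to X
      have hcv : (c s(a,b) : ℕ) = r - 1 := by
        rw [hc]; show cNat G X r s(a,b) % r = _
        rw [cNat_mk_out G X r ha hb, Nat.mod_eq_of_lt (by omega)]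
      have hiv : (i : ℕ) = r - 1 := by rw [← hcab]; exact hcv
      have hno : ∀ v, v ∉ X → ¬ ∃ u, u ∈ X ∧ G.Adj v u ∧ c s(v, u) = i := by
        rintro v hv ⟨u, hu, hvu, hcu⟩
        have h1 := hcol u v hu hv hvu.symm
        have hlt : ((X.filter (fun x => G.Adj v x)).toList.idxOf u) <
            (X.filter (fun x => G.Adj v x)).card := by
          have hmem : u ∈ (X.filter (fun x => G.Adj v x)).toList := by
            simp [Finset.mem_toList, Finset.mem_filter, hu, hvu]
          simpa [Finset.length_toList] using List.idxOf_lt_length_iff.2 hmem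
        have hle := hcardN v hv
        have : c s(v, u) = c s(u, v) := by rw [Sym2.eq_swap]
        rw [this] at hcu
        have : (c s(u,v) : ℕ) = (i : ℕ) := by rw [hcu]
        rw [h1.1, hiv] at this
        omega
      rw [hlab]
      simp only [ha, hb, if_false]
      rw [dif_neg (hno a ha), dif_neg (hno b hb)]
  -- conclude via walks
  have walklab : ∀ {a b : V}, (monoSub G c i).Walk a b → lab a = lab b := by
    intro a b p
    induction p with
    | nil => rfl
    | cons h p ih => exact (pres _ _ h).trans ih
  intro x y hx hy hreach
  obtain ⟨p⟩ := hreach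
  have hlabeq : lab x = lab y := walklab p
  have hx' : lab x = x := by
    rcases hx with h | h
    · exact lab_mem x h
    · rw [h]; exact lab_w
  have hy' : lab y = y := by
    rcases hy with h | h
    · exact lab_mem y h
    · rw [h]; exact lab_w
  rw [hx', hy'] at hlabeq
  exact hlabeq

/-- Observation: a sparse independent non-dominating set of size s forces tc_r(G) > s. -/
theorem stmt1 {V : Type*} [Fintype V] (r s : ℕ) (hr : 1 ≤ r) (hrs : r ≤ s)
    (G : SimpleGraph V) (X : Finset V)
    (hcard : X.card = s)
    (hindep : ∀ u ∈ X, ∀ v ∈ X, ¬ G.Adj u v)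
    (hdeg : ∀ v, v ∉ X → ({u : V | u ∈ X ∧ G.Adj v u}.ncard ≤ r - 1))
    (hnotdom : ∃ v, v ∉ X ∧ ∀ u ∈ X, ¬ G.Adj v u) :
    ∃ c : Sym2 V → Fin r, ¬ HasMonoCover G c s := by
  classical
  obtain ⟨w, hw, hwadj⟩ := hnotdom
  have hr0 : 0 < r := hr
  refine ⟨myc G X r hr0, ?_⟩
  rintro ⟨t, ht, f, col, hconn, hcover⟩
  set c := myc G X r hr0 with hc
  -- choose a covering index for each vertex of insert w X
  have hsel : ∀ z : V, ∃ j : Fin t, z ∈ f j := by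
    intro z
    have : z ∈ ⋃ j, f j := by rw [hcover]; exact Set.mem_univ z
    exact Set.mem_iUnion.1 this
  choose j hj using hsel
  have hinj : Set.InjOn j ↑(insert w X) := by
    intro z hz z' hz' hjz
    have hz1 : z ∈ X ∨ z = w := by
      rcases Finset.mem_insert.1 (by exact_mod_cast hz) with h | h
      · exact Or.inr h
      · exact Or.inl h
    have hz1' : z' ∈ X ∨ z' = w := by
      rcases Finset.mem_insert.1 (by exact_mod_cast hz') with h | h
      · exact Or.inr h
      · exact Or.inl h
    -- z, z' in the same part, which is connected in some color
    have hz2 : z ∈ f (j z) := hj z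
    have hz2' : z' ∈ f (j z) := by rw [hjz]; exact hj z'
    have hreach : ((monoSub G c (col (j z))).induce (f (j z))).Reachable
        ⟨z, hz2⟩ ⟨z', hz2'⟩ := (hconn (j z)).preconnected _ _
    have hreach' : (monoSub G c (col (j z))).Reachable z z' := by
      have := hreach.map (SimpleGraph.Embedding.induce (f (j z))).toHom
      simpa using this
    exact key r hr0 G X w hindep hdeg hw hwadj (col (j z)) z z' hz1 hz1' hreach'
  have hcount : (insert w X).card ≤ t := by
    have h1 : (insert w X).card ≤ (Finset.univ : Finset (Fin t)).card :=
      Finset.card_le_card_of_injOn j (fun _ _ => Finset.mem_univ _) hinj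
    simpa using h1
  rw [Finset.card_insert_of_notMem hw, hcard] at hcount
  omega
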